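/- Let F(x; I₀, S₀, τ, ν) = I₀ + S₀(1 − exp(−τx)) − νx and let 𝓘(t; I₀, S₀, τ, ν) be the solution of 𝓘' = F(𝓘) with 𝓘(t₀) = 0. Fix t > t₀. Then 𝓘(t) is strictly increasing in each of I₀ > 0, S₀ > 0, τ > 0, and strictly decreasing in ν > 0 (equivalently strictly increasing in 1/ν). -/

import Mathlib

open Set Filter

/-- If `f` has positive derivative at `a`, then there is a point `s ∈ (a, b)`
with `f a < f s`. -/
lemma slope_pos_aux {f : ℝ → ℝ} {a b c : ℝ} (hab : a < b) (hf : HasDerivAt f c a)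
    (hc : 0 < c) : ∃ s ∈ Set.Ioo a b, f a < f s := by
  have h := hasDerivAt_iff_tendsto_slope.1 hf
  have h' : Filter.Tendsto (slope f a) (nhdsWithin a (Set.Ioi a)) (nhds c) :=
    h.mono_left (nhdsWithin_mono a fun x hx => ne_of_gt hx)
  have h2 : ∀ᶠ z in nhdsWithin a (Set.Ioi a), 0 < slope f a z :=
    h'.eventually (eventually_gt_nhds hc)
  have h3 : Set.Ioo a b ∈ nhdsWithin a (Set.Ioi a) := Ioo_mem_nhdsGT_of_mem ⟨le_rfl, hab⟩
  obtain ⟨z, hz1, hz2⟩ := (h2.and (eventually_of_mem h3 fun x hx => hx)).exists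
  refine ⟨z, hz2, ?_⟩
  have hza : 0 < z - a := sub_pos.2 hz2.1
  rw [slope_def_field, div_pos_iff] at hz1
  rcases hz1 with ⟨h4, _⟩ | ⟨_, h5⟩
  · linarith
  · linarith

/-- Nonnegativity of solutions of the ODE. -/
lemma nonneg_sol (t₀ t I₀ S₀ τ ν : ℝ) (hI₀ : 0 < I₀) (𝓘 : ℝ → ℝ) (h0 : 𝓘 t₀ = 0)
    (h : ∀ s ∈ Set.Icc t₀ t,
      HasDerivAt 𝓘 (I₀ + S₀ * (1 - Real.exp (-τ * 𝓘 s)) - ν * 𝓘 s) s) :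
    ∀ s ∈ Set.Icc t₀ t, 0 ≤ 𝓘 s := by
  intro s hs
  refine image_le_of_deriv_right_lt_deriv_boundary' (f := fun _ => (0:ℝ))
    (f' := fun _ => (0:ℝ)) (B := 𝓘)
    (B' := fun x => I₀ + S₀ * (1 - Real.exp (-τ * 𝓘 x)) - ν * 𝓘 x)
    continuousOn_const (fun x _ => hasDerivWithinAt_const x _ 0) (by rw [h0])
    (fun x hx => (h x hx).continuousAt.continuousWithinAt)
    (fun x hx => (h x (Set.Ico_subset_Icc_self hx)).hasDerivWithinAt) ?_ hs
  intro x _ hfB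
  have h0x : 𝓘 x = 0 := by simpa using hfB.symm
  simpa [h0x] using hI₀

set_option maxHeartbeats 1000000 in
theorem stmt_4 (t₀ t : ℝ) (ht : t₀ < t)
    (I₀ S₀ τ ν I₀' S₀' τ' ν' : ℝ)
    (hI₀ : 0 < I₀) (hS₀ : 0 < S₀) (hτ : 0 < τ) (hν : 0 < ν)
    (hI₀' : 0 < I₀') (hS₀' : 0 < S₀') (hτ' : 0 < τ') (hν' : 0 < ν')
    (h1 : I₀ ≤ I₀') (h2 : S₀ ≤ S₀') (h3 : τ ≤ τ') (h4 : ν' ≤ ν)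
    (hne : (I₀, S₀, τ, ν) ≠ (I₀', S₀', τ', ν'))
    (𝓘₁ 𝓘₂ : ℝ → ℝ)
    (h𝓘₁0 : 𝓘₁ t₀ = 0) (h𝓘₂0 : 𝓘₂ t₀ = 0)
    (h𝓘₁ : ∀ s ∈ Set.Icc t₀ t,
      HasDerivAt 𝓘₁ (I₀ + S₀ * (1 - Real.exp (-τ * 𝓘₁ s)) - ν * 𝓘₁ s) s)
    (h𝓘₂ : ∀ s ∈ Set.Icc t₀ t,
      HasDerivAt 𝓘₂ (I₀' + S₀' * (1 - Real.exp (-τ' * 𝓘₂ s)) - ν' * 𝓘₂ s) s) :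
    𝓘₁ t < 𝓘₂ t := by
  -- notation for the two vector fields
  set F₁ : ℝ → ℝ := fun x => I₀ + S₀ * (1 - Real.exp (-τ * x)) - ν * x with hF₁
  set F₂ : ℝ → ℝ := fun x => I₀' + S₀' * (1 - Real.exp (-τ' * x)) - ν' * x with hF₂
  -- pointwise comparison of vector fields on nonnegative reals
  have Fle : ∀ x : ℝ, 0 ≤ x → F₁ x ≤ F₂ x := by
    intro x hx
    have e1 : Real.exp (-τ' * x) ≤ Real.exp (-τ * x) :=
      Real.exp_le_exp.2 (by nlinarith)
    have e2 : Real.exp (-τ * x) ≤ 1 := Real.exp_le_one_iff.2 (by nlinarith)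
    have e3 : S₀ * (1 - Real.exp (-τ * x)) ≤ S₀' * (1 - Real.exp (-τ' * x)) :=
      mul_le_mul h2 (by linarith) (by linarith) hS₀'.le
    have e4 : ν' * x ≤ ν * x := mul_le_mul_of_nonneg_right h4 hx
    simp only [hF₁, hF₂]
    linarith
  -- strict pointwise comparison for positive arguments
  have Flt : ∀ x : ℝ, 0 < x → F₁ x < F₂ x := by
    intro x hx
    have hdiff : I₀ ≠ I₀' ∨ S₀ ≠ S₀' ∨ τ ≠ τ' ∨ ν ≠ ν' := by
      by_contra hc
      push_neg at hc
      obtain ⟨a, b, c, d⟩ := hc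
      exact hne (by simp [a, b, c, d])
    have e1 : Real.exp (-τ' * x) ≤ Real.exp (-τ * x) :=
      Real.exp_le_exp.2 (by nlinarith)
    have e2 : Real.exp (-τ * x) < 1 := by
      rw [Real.exp_lt_one_iff]; nlinarith
    have e4 : ν' * x ≤ ν * x := mul_le_mul_of_nonneg_right h4 hx.le
    have e3 : S₀ * (1 - Real.exp (-τ * x)) ≤ S₀' * (1 - Real.exp (-τ' * x)) :=
      mul_le_mul h2 (by linarith) (by linarith) hS₀'.le
    simp only [hF₁, hF₂]
    rcases hdiff with h | h | h | h
    · have : I₀ < I₀' := lt_of_le_of_ne h1 h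
      linarith
    · have hs : S₀ < S₀' := lt_of_le_of_ne h2 h
      have : S₀ * (1 - Real.exp (-τ * x)) < S₀' * (1 - Real.exp (-τ' * x)) := by
        calc S₀ * (1 - Real.exp (-τ * x)) < S₀' * (1 - Real.exp (-τ * x)) := by
              apply mul_lt_mul_of_pos_right hs; linarith
          _ ≤ S₀' * (1 - Real.exp (-τ' * x)) := by
              apply mul_le_mul_of_nonneg_left (by linarith) hS₀'.le
      linarith
    · have hτlt : τ < τ' := lt_of_le_of_ne h3 h
      have e1' : Real.exp (-τ' * x) < Real.exp (-τ * x) :=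
        Real.exp_lt_exp.2 (by nlinarith)
      have : S₀ * (1 - Real.exp (-τ * x)) < S₀' * (1 - Real.exp (-τ' * x)) := by
        calc S₀ * (1 - Real.exp (-τ * x)) ≤ S₀' * (1 - Real.exp (-τ * x)) := by
              apply mul_le_mul_of_nonneg_right h2; linarith
          _ < S₀' * (1 - Real.exp (-τ' * x)) := by
              apply mul_lt_mul_of_pos_left (by linarith) hS₀'
      linarith
    · have : ν' < ν := lt_of_le_of_ne h4 (Ne.symm h)
      have : ν' * x < ν * x := mul_lt_mul_of_pos_right this hx
      linarith
  -- nonnegativity of 𝓘₂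
  have hnn₂ : ∀ s ∈ Set.Icc t₀ t, 0 ≤ 𝓘₂ s :=
    nonneg_sol t₀ t I₀' S₀' τ' ν' hI₀' 𝓘₂ h𝓘₂0 h𝓘₂
  have cont₁ : ContinuousOn 𝓘₁ (Set.Icc t₀ t) :=
    fun s hs => (h𝓘₁ s hs).continuousAt.continuousWithinAt
  have cont₂ : ContinuousOn 𝓘₂ (Set.Icc t₀ t) :=
    fun s hs => (h𝓘₂ s hs).continuousAt.continuousWithinAt
  set K : ℝ := S₀ * τ + 1 with hK
  -- weak comparison
  have hcomp : ∀ s ∈ Set.Icc t₀ t, 𝓘₁ s ≤ 𝓘₂ s := by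
    intro s hs
    have key : ∀ ε > (0:ℝ), 𝓘₁ s ≤ 𝓘₂ s + ε * Real.exp (K * (s - t₀)) := by
      intro ε hε
      refine image_le_of_deriv_right_lt_deriv_boundary'
        (f := 𝓘₁) (f' := fun x => F₁ (𝓘₁ x))
        (B := fun x => 𝓘₂ x + ε * Real.exp (K * (x - t₀)))
        (B' := fun x => F₂ (𝓘₂ x) + ε * (Real.exp (K * (x - t₀)) * K))
        cont₁ (fun x hx => (h𝓘₁ x (Set.Ico_subset_Icc_self hx)).hasDerivWithinAt)
        ?_ ?_ ?_ ?_ hs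
      · simp [h𝓘₁0, h𝓘₂0]
        positivity
      · refine cont₂.add (Continuous.continuousOn ?_)
        exact continuous_const.mul (Real.continuous_exp.comp
          (continuous_const.mul (continuous_id.sub continuous_const)))
      · intro x hx
        have hB2 : HasDerivAt (fun x => ε * Real.exp (K * (x - t₀)))
            (ε * (Real.exp (K * (x - t₀)) * K)) x := by
          have h1 : HasDerivAt (fun x : ℝ => K * (x - t₀)) K x := by
            simpa using ((hasDerivAt_id x).sub_const t₀).const_mul K
          exact h1.exp.const_mul ε
        exact ((h𝓘₂ x (Set.Ico_subset_Icc_self hx)).hasDerivWithinAt).add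
          hB2.hasDerivWithinAt
      · intro x hx hfB
        beta_reduce at hfB ⊢
        set a := 𝓘₂ x with ha
        set d := ε * Real.exp (K * (x - t₀)) with hdd
        have hd : 0 < d := by positivity
        have ha0 : 0 ≤ a := hnn₂ x (Set.Ico_subset_Icc_self hx)
        have hEa : Real.exp (-τ * a) ≤ 1 := Real.exp_le_one_iff.2 (by nlinarith)
        have hEd : 1 - Real.exp (-(τ * d)) ≤ τ * d := by
          nlinarith [Real.add_one_le_exp (-(τ * d))]
        have hEd0 : Real.exp (-(τ * d)) ≤ 1 := Real.exp_le_one_iff.2 (by nlinarith)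
        have hsplit : Real.exp (-τ * (a + d)) = Real.exp (-τ * a) * Real.exp (-(τ * d)) := by
          rw [← Real.exp_add]; ring_nf
        have key1 : Real.exp (-τ * a) - Real.exp (-τ * (a + d)) ≤ τ * d := by
          rw [hsplit]
          calc Real.exp (-τ * a) - Real.exp (-τ * a) * Real.exp (-(τ * d))
              = Real.exp (-τ * a) * (1 - Real.exp (-(τ * d))) := by ring
            _ ≤ 1 * (τ * d) := by
                apply mul_le_mul hEa hEd (by linarith) one_pos.le
            _ = τ * d := one_mul _
        have hmul : S₀ * (Real.exp (-τ * a) - Real.exp (-τ * (a + d))) ≤ S₀ * (τ * d) :=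
          mul_le_mul_of_nonneg_left key1 hS₀.le
        have hF : F₁ a ≤ F₂ a := Fle a ha0
        have hνd : 0 ≤ ν * d := by positivity
        have hKd : ε * (Real.exp (K * (x - t₀)) * K) = d * (S₀ * τ) + d := by
          rw [hdd, hK]; ring
        have hST : S₀ * (τ * d) = d * (S₀ * τ) := by ring
        simp only [hF₁, hF₂] at hF ⊢
        rw [hfB]
        linarith
    by_contra hlt
    push_neg at hlt
    set C := Real.exp (K * (s - t₀)) with hC
    have hC0 : 0 < C := Real.exp_pos _
    have := key ((𝓘₁ s - 𝓘₂ s) / (2 * C)) (div_pos (by linarith) (by positivity))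
    have hεC : (𝓘₁ s - 𝓘₂ s) / (2 * C) * C = (𝓘₁ s - 𝓘₂ s) / 2 := by
      field_simp
    rw [hεC] at this
    linarith
  -- find a point where 𝓘₁ is positive
  have hd0 : HasDerivAt 𝓘₁ I₀ t₀ := by
    have h := h𝓘₁ t₀ ⟨le_rfl, ht.le⟩
    rw [h𝓘₁0] at h
    simpa using h
  obtain ⟨t₁, ht₁, hpos₁⟩ := slope_pos_aux ht hd0 hI₀
  rw [h𝓘₁0] at hpos₁
  have ht₁Icc : t₁ ∈ Set.Icc t₀ t := ⟨ht₁.1.le, ht₁.2.le⟩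
  -- find a point t₂ ∈ (t₀, t) where 𝓘₁ t₂ < 𝓘₂ t₂
  have hstep : ∃ t₂ ∈ Set.Ioo t₀ t, 𝓘₁ t₂ < 𝓘₂ t₂ := by
    rcases (hcomp t₁ ht₁Icc).lt_or_eq with hlt | heq
    · exact ⟨t₁, ht₁, hlt⟩
    · -- 𝓘₁ t₁ = 𝓘₂ t₁ > 0; the difference has positive derivative at t₁
      have hw : HasDerivAt (fun s => 𝓘₂ s - 𝓘₁ s) (F₂ (𝓘₂ t₁) - F₁ (𝓘₁ t₁)) t₁ :=
        (h𝓘₂ t₁ ht₁Icc).sub (h𝓘₁ t₁ ht₁Icc)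
      have hder : 0 < F₂ (𝓘₂ t₁) - F₁ (𝓘₁ t₁) := by
        rw [← heq]
        linarith [Flt (𝓘₁ t₁) hpos₁]
      obtain ⟨s, hs, hws⟩ := slope_pos_aux ht₁.2 hw hder
      refine ⟨s, ⟨ht₁.1.trans hs.1, hs.2⟩, ?_⟩
      rw [← heq] at hws
      simp at hws
      linarith
  obtain ⟨t₂, ht₂, hw₂⟩ := hstep
  -- propagate: φ s = exp(ν s) * (𝓘₂ s - 𝓘₁ s) is nondecreasing on [t₂, t]
  set φ : ℝ → ℝ := fun s => Real.exp (ν * s) * (𝓘₂ s - 𝓘₁ s) with hφ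
  have hsub : Set.Icc t₂ t ⊆ Set.Icc t₀ t := Set.Icc_subset_Icc ht₂.1.le le_rfl
  have hφderiv : ∀ x ∈ Set.Icc t₀ t, HasDerivAt φ
      (Real.exp (ν * x) * ν * (𝓘₂ x - 𝓘₁ x) +
        Real.exp (ν * x) * (F₂ (𝓘₂ x) - F₁ (𝓘₁ x))) x := by
    intro x hx
    have hE : HasDerivAt (fun s : ℝ => Real.exp (ν * s)) (Real.exp (ν * x) * ν) x := by
      have : HasDerivAt (fun s : ℝ => ν * s) ν x := by simpa using (hasDerivAt_id x).const_mul ν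
      exact this.exp
    have hW : HasDerivAt (fun s => 𝓘₂ s - 𝓘₁ s) (F₂ (𝓘₂ x) - F₁ (𝓘₁ x)) x :=
      (h𝓘₂ x hx).sub (h𝓘₁ x hx)
    exact hE.mul hW
  have hφmono : φ t₂ ≤ φ t := by
    refine image_le_of_deriv_right_le_deriv_boundary
      (f := fun _ => φ t₂) (f' := fun _ => (0:ℝ)) (B := φ)
      (B' := fun x => Real.exp (ν * x) * ν * (𝓘₂ x - 𝓘₁ x) +
        Real.exp (ν * x) * (F₂ (𝓘₂ x) - F₁ (𝓘₁ x)))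
      continuousOn_const (fun x _ => hasDerivWithinAt_const x _ _) le_rfl
      (fun x hx => ((hφderiv x (hsub hx)).continuousAt).continuousWithinAt)
      (fun x hx => (hφderiv x (hsub (Set.Ico_subset_Icc_self hx))).hasDerivWithinAt)
      ?_ ⟨ht₂.2.le, le_rfl⟩
    intro x hx
    beta_reduce
    have hxI : x ∈ Set.Icc t₀ t := hsub (Set.Ico_subset_Icc_self hx)
    have hab : 𝓘₁ x ≤ 𝓘₂ x := hcomp x hxI
    have hb0 : 0 ≤ 𝓘₂ x := hnn₂ x hxI
    have hFb : F₁ (𝓘₂ x) ≤ F₂ (𝓘₂ x) := Fle (𝓘₂ x) hb0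
    have hGmono : Real.exp (-τ * 𝓘₂ x) ≤ Real.exp (-τ * 𝓘₁ x) :=
      Real.exp_le_exp.2 (by nlinarith)
    have hE0 : (0:ℝ) < Real.exp (ν * x) := Real.exp_pos _
    have hkey : 0 ≤ ν * (𝓘₂ x - 𝓘₁ x) + (F₂ (𝓘₂ x) - F₁ (𝓘₁ x)) := by
      have hdiff : ν * (𝓘₂ x - 𝓘₁ x) + (F₁ (𝓘₂ x) - F₁ (𝓘₁ x)) =
          S₀ * (Real.exp (-τ * 𝓘₁ x) - Real.exp (-τ * 𝓘₂ x)) := by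
        simp only [hF₁]; ring
      nlinarith [mul_nonneg hS₀.le (sub_nonneg.2 hGmono)]
    nlinarith [mul_nonneg hE0.le hkey]
  have hφ₂ : 0 < φ t₂ := by
    simp only [hφ]
    have := Real.exp_pos (ν * t₂)
    nlinarith
  have hφt : 0 < φ t := lt_of_lt_of_le hφ₂ hφmono
  simp only [hφ] at hφt
  nlinarith [Real.exp_pos (ν * t), hφt]
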